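/- For r ≥ 2, the polynomial equation x^r = x^{r-1} + x^{r-2} + ... + x + 1 has exactly one real root in the interval (1,2), and this root lies in the interval (2(1 - 2^{-r}), 2). -/

import Mathlib

private lemma two_mul_le_two_pow : ∀ n : ℕ, 2 ≤ n → 2 * n ≤ 2 ^ n := by
  intro n hn
  induction n, hn using Nat.le_induction with
  | base => norm_num
  | succ n hn ih =>
    have h2 : 2 ≤ 2 ^ n := by
      calc 2 = 2 ^ 1 := (pow_one 2).symm
        _ ≤ 2 ^ n := Nat.pow_le_pow_right (by norm_num) (by omega)
    calc 2 * (n + 1) = 2 * n + 2 := by ring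
      _ ≤ 2 ^ n + 2 ^ n := Nat.add_le_add ih h2
      _ = 2 ^ (n + 1) := by rw [pow_succ]; ring

private lemma bernoulli_strict (c : ℝ) (hc0 : 0 < c) (hc1 : c < 1) :
    ∀ n : ℕ, 2 ≤ n → (1 : ℝ) - n * c < (1 - c) ^ n := by
  intro n hn
  induction n, hn using Nat.le_induction with
  | base => push_cast; nlinarith
  | succ n hn ih =>
    have h1 : (0:ℝ) < 1 - c := by linarith
    have hnc : (0:ℝ) ≤ (n:ℝ) * c * c :=
      mul_nonneg (mul_nonneg (Nat.cast_nonneg n) hc0.le) hc0.le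
    have h3 : (1 - c) * (1 - n * c) < (1 - c) * (1 - c) ^ n := by nlinarith
    push_cast
    calc (1:ℝ) - (n+1) * c ≤ (1 - c) * (1 - n * c) := by nlinarith
      _ < (1 - c) ^ (n+1) := by rw [pow_succ']; exact h3

theorem rnacci_char_root (r : ℕ) (hr : 2 ≤ r) :
    (∃! x : ℝ, x ∈ Set.Ioo (1 : ℝ) 2 ∧ x ^ r = ∑ i ∈ Finset.range r, x ^ i) ∧
    (∀ x : ℝ, x ∈ Set.Ioo (1 : ℝ) 2 → x ^ r = ∑ i ∈ Finset.range r, x ^ i →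
      x ∈ Set.Ioo (2 * (1 - (2 : ℝ) ^ (-(r : ℤ)))) 2) := by
  set g : ℝ → ℝ := fun x => ∑ i ∈ Finset.range r, (x⁻¹) ^ (i + 1) with hg
  -- key algebraic identity
  have hmul : ∀ x : ℝ, x ≠ 0 → x ^ r * g x = ∑ i ∈ Finset.range r, x ^ i := by
    intro x hx
    rw [hg]
    simp only
    rw [Finset.mul_sum, ← Finset.sum_range_reflect (fun i => x ^ i) r]
    refine Finset.sum_congr rfl fun i hi => ?_
    rw [Finset.mem_range] at hi
    rw [inv_pow, ← pow_sub₀ x hx (by omega : i + 1 ≤ r)]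
    congr 1
    omega
  -- equivalence on positive reals
  have hequiv : ∀ x : ℝ, 0 < x → (x ^ r = ∑ i ∈ Finset.range r, x ^ i ↔ g x = 1) := by
    intro x hx
    have hp : (0:ℝ) < x ^ r := pow_pos hx r
    rw [← hmul x hx.ne']
    constructor
    · intro h
      have := mul_left_cancel₀ hp.ne' (by rw [mul_one]; exact h : x ^ r * 1 = x ^ r * g x)
      exact this.symm
    · intro h; rw [h, mul_one]
  -- strict antitonicity
  have hanti : StrictAntiOn g (Set.Ioi (0:ℝ)) := by
    intro x hx y hy hxy
    simp only [Set.mem_Ioi] at hx hy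
    apply Finset.sum_lt_sum_of_nonempty (Finset.nonempty_range_iff.2 (by omega))
    intro i _
    have h1 : (0:ℝ) < y⁻¹ := inv_pos.2 (by linarith)
    have h2 : y⁻¹ < x⁻¹ := by
      apply inv_strictAnti₀ hx hxy
    exact pow_lt_pow_left₀ h2 h1.le (by omega)
  -- continuity on [1,2]
  have hcont : ContinuousOn g (Set.Icc (1:ℝ) 2) := by
    apply continuousOn_finset_sum
    intro i _
    have hinv : ContinuousOn (fun x : ℝ => x⁻¹) (Set.Icc (1:ℝ) 2) := by
      apply ContinuousOn.inv₀ continuousOn_id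
      intro x hx
      simp only [Set.mem_Icc] at hx
      simp only [id]
      intro h
      rw [h] at hx
      linarith [hx.1]
    exact hinv.pow _
  -- values at endpoints
  have hg1 : g 1 = r := by simp [hg]
  have hg2 : g 2 < 1 := by
    have h2 : (2:ℝ) ^ r * g 2 = (2:ℝ) ^ r - 1 := by
      rw [hmul 2 (by norm_num), geom_sum_eq (by norm_num : (2:ℝ) ≠ 1)]
      ring
    have hp : (0:ℝ) < 2 ^ r := by positivity
    nlinarith
  have hg1' : (1:ℝ) < g 1 := by rw [hg1]; exact_mod_cast by omega
  -- existence via IVT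
  obtain ⟨x, hxmem, hxval⟩ := intermediate_value_Ioo' (by norm_num : (1:ℝ) ≤ 2) hcont
    (Set.mem_Ioo.2 ⟨hg2, hg1'⟩)
  -- the lower bound value
  set c : ℝ := (2:ℝ) ^ (-(r : ℤ)) with hcdef
  have hcval : c = ((2:ℝ) ^ r)⁻¹ := by
    rw [hcdef, zpow_neg, zpow_natCast]
  have hpr : (0:ℝ) < 2 ^ r := by positivity
  have hc0 : 0 < c := by rw [hcval]; positivity
  have hrle : (2 * r : ℝ) ≤ 2 ^ r := by
    exact_mod_cast two_mul_le_two_pow r hr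
  have hc4 : c ≤ 1/4 := by
    rw [hcval]
    rw [inv_le_comm₀ (by positivity) (by norm_num)]
    have hr2 : (2:ℝ) ≤ (r:ℝ) := by exact_mod_cast hr
    norm_num
    linarith
  have hc1 : c < 1 := by linarith
  set a : ℝ := 2 * (1 - c) with hadef
  have ha1 : (1:ℝ) < a := by rw [hadef]; nlinarith
  have ha2 : a < 2 := by rw [hadef]; nlinarith
  -- key inequality: 2 * (1-c)^r > 1
  have hber : (1:ℝ)/2 < (1 - c) ^ r := by
    have := bernoulli_strict c hc0 hc1 r hr
    have hrc : (r:ℝ) * c ≤ 1/2 := by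
      rw [hcval]
      rw [mul_inv_le_iff₀ hpr]
      nlinarith
    linarith
  -- g a > 1
  have hga : 1 < g a := by
    have hane : a ≠ 0 := by linarith
    have hma : a ^ r * g a = (a ^ r - 1) / (a - 1) := by
      rw [hmul a hane, geom_sum_eq (by linarith : a ≠ 1)]
    have hap : (0:ℝ) < a ^ r := pow_pos (by linarith) r
    -- a^r * (2 - a) = 2 * (1-c)^r > 1
    have h2a : 2 - a = 2 * c := by rw [hadef]; ring
    have har : a ^ r = 2 ^ r * (1 - c) ^ r := by
      rw [hadef, mul_pow]
    have hid : (2:ℝ) ^ r * (1 - c) ^ r * (2 * c) = 2 * (1 - c) ^ r := by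
      rw [hcval]; field_simp
    have hkey : 1 < a ^ r * (2 - a) := by
      rw [h2a, har, hid]
      linarith
    -- thus (a^r - 1)/(a-1) > a^r, so g a > 1
    have ha1' : (0:ℝ) < a - 1 := by linarith
    have : a ^ r < (a ^ r - 1) / (a - 1) := by
      rw [lt_div_iff₀ ha1']
      nlinarith
    rw [← hma] at this
    have := (mul_lt_mul_iff_right₀ hap).1 (by rw [mul_one]; exact this : a ^ r * 1 < a ^ r * g a)
    exact this
  constructor
  · refine ⟨x, ⟨hxmem, (hequiv x (by linarith [hxmem.1])).2 hxval⟩, ?_⟩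
    rintro y ⟨hymem, hyval⟩
    have hy1 := (hequiv y (by linarith [hymem.1])).1 hyval
    exact hanti.injOn (Set.mem_Ioi.2 (by linarith [hymem.1]))
      (Set.mem_Ioi.2 (by linarith [hxmem.1])) (by rw [hy1, hxval])
  · intro y hymem hyval
    have hy0 : (0:ℝ) < y := by linarith [hymem.1]
    have hy1 := (hequiv y hy0).1 hyval
    refine ⟨?_, hymem.2⟩
    have hmema : a ∈ Set.Ioi (0:ℝ) := Set.mem_Ioi.2 (by linarith)
    have hmemy : y ∈ Set.Ioi (0:ℝ) := Set.mem_Ioi.2 hy0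
    have := (hanti.lt_iff_gt hmemy hmema).1 (by rw [hy1]; exact hga)
    exact this
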